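/- Let h : R^m → R be convex and L-Lipschitz and c : R^d → R^m be C¹-smooth with β-Lipschitz Jacobian. Then the composition h∘c is μ-weakly convex with μ = Lβ, i.e., the function x ↦ h(c(x)) + (μ/2)‖x‖² is convex. -/

import Mathlib

lemma taylor_quad {F : Type*} [NormedAddCommGroup F] [NormedSpace ℝ F] [CompleteSpace F]
    (φ φ' : ℝ → F) (M : ℝ) (hM : 0 ≤ M)
    (hφ : ∀ s, HasDerivAt φ (φ' s) s)
    (hlip : ∀ s u, ‖φ' s - φ' u‖ ≤ M * |s - u|)
    (a b : ℝ) (hab : a ≤ b) :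
    ‖φ b - φ a - (b - a) • φ' a‖ ≤ M / 2 * (b - a) ^ 2 := by
  have hlipW : LipschitzWith ⟨M, hM⟩ φ' := by
    refine LipschitzWith.of_dist_le_mul fun s u => ?_
    rw [dist_eq_norm, Real.dist_eq]
    exact hlip s u
  have hcont : Continuous φ' := hlipW.continuous
  have hint : ∀ g : ℝ → F, Continuous g → IntervalIntegrable g MeasureTheory.volume a b :=
    fun g hg => hg.intervalIntegrable a b
  have heq : φ b - φ a = ∫ s in a..b, φ' s :=
    (intervalIntegral.integral_eq_sub_of_hasDerivAt (fun s _ => hφ s) (hint _ hcont)).symm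
  have heq2 : φ b - φ a - (b - a) • φ' a = ∫ s in a..b, (φ' s - φ' a) := by
    rw [intervalIntegral.integral_sub (hint _ hcont) (hint _ continuous_const),
      intervalIntegral.integral_const, heq]
  have hgval : (∫ s in a..b, M * (s - a)) = M / 2 * (b - a) ^ 2 := by
    rw [intervalIntegral.integral_const_mul]
    have : (∫ s in a..b, (s - a)) = ∫ s in a - a..b - a, s :=
      intervalIntegral.integral_comp_sub_right (fun s => s) a
    rw [this, integral_id]
    ring
  rw [heq2]
  calc ‖∫ s in a..b, (φ' s - φ' a)‖ ≤ |∫ s in a..b, M * (s - a)| := by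
        apply intervalIntegral.norm_integral_le_abs_of_norm_le
        · filter_upwards [MeasureTheory.ae_restrict_mem measurableSet_uIoc] with s hs
          have hs' : a ≤ s := by
            rcases Set.mem_uIoc.1 hs with h1 | h1
            · linarith [h1.1]
            · linarith [h1.2, hab, h1.1]
          have := hlip s a
          rwa [abs_of_nonneg (by linarith)] at this
        · exact (Continuous.intervalIntegrable (by continuity) a b)
    _ = M / 2 * (b - a) ^ 2 := by
        rw [hgval, abs_of_nonneg (by positivity)]

lemma taylor_quad' {F : Type*} [NormedAddCommGroup F] [NormedSpace ℝ F] [CompleteSpace F]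
    (φ φ' : ℝ → F) (M : ℝ) (hM : 0 ≤ M)
    (hφ : ∀ s, HasDerivAt φ (φ' s) s)
    (hlip : ∀ s u, ‖φ' s - φ' u‖ ≤ M * |s - u|)
    (a b : ℝ) (hab : a ≤ b) :
    ‖φ a - φ b + (b - a) • φ' b‖ ≤ M / 2 * (b - a) ^ 2 := by
  have key := taylor_quad (fun s => φ (-s)) (fun s => -φ' (-s)) M hM
    (fun s => by
      have := (hφ (-s)).scomp s (hasDerivAt_neg s)
      simpa [neg_one_smul, Function.comp_def] using this)
    (fun s u => by
      rw [neg_sub_neg]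
      calc ‖φ' (-u) - φ' (-s)‖ ≤ M * |(-u) - (-s)| := hlip (-u) (-s)
        _ = M * |s - u| := by rw [show (-u) - (-s) = s - u by ring])
    (-b) (-a) (by linarith)
  have : φ (-(-a)) - φ (-(-b)) - (-a - -b) • (-φ' (-(-b))) = φ a - φ b + (b - a) • φ' b := by
    simp; module
  rw [this] at key
  calc ‖φ a - φ b + (b - a) • φ' b‖ ≤ M / 2 * (-a - -b) ^ 2 := key
    _ = M / 2 * (b - a) ^ 2 := by ring_nf

lemma chord_bound {d m : ℕ}
    (c : EuclideanSpace ℝ (Fin d) → EuclideanSpace ℝ (Fin m))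
    (β : ℝ) (hβ : 0 ≤ β) (hc : ContDiff ℝ 1 c)
    (hcβ : ∀ x y, ‖fderiv ℝ c x - fderiv ℝ c y‖ ≤ β * ‖x - y‖)
    (x y : EuclideanSpace ℝ (Fin d)) (a b : ℝ)
    (ha : 0 ≤ a) (hb : 0 ≤ b) (hab : a + b = 1) :
    ‖c (a • x + b • y) - (a • c x + b • c y)‖ ≤ β * ‖x - y‖ ^ 2 / 2 * (a * b) := by
  set p : ℝ → EuclideanSpace ℝ (Fin d) := fun s => y + s • (x - y) with hp
  set φ : ℝ → EuclideanSpace ℝ (Fin m) := fun s => c (p s) with hφdef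
  set φ' : ℝ → EuclideanSpace ℝ (Fin m) := fun s => fderiv ℝ c (p s) (x - y) with hφ'def
  set M : ℝ := β * ‖x - y‖ ^ 2 with hM
  have hMpos : 0 ≤ M := by positivity
  have hdiff : ∀ z, HasFDerivAt c (fderiv ℝ c z) z :=
    fun z => ((hc.differentiable one_ne_zero) z).hasFDerivAt
  have hφ : ∀ s, HasDerivAt φ (φ' s) s := by
    intro s
    have hps : HasDerivAt p (x - y) s := by
      have := ((hasDerivAt_id s).smul_const (x - y)).const_add y; rw [one_smul] at this; exact this
    exact (hdiff (p s)).comp_hasDerivAt s hps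
  have hlip : ∀ s u, ‖φ' s - φ' u‖ ≤ M * |s - u| := by
    intro s u
    have h1 : φ' s - φ' u = (fderiv ℝ c (p s) - fderiv ℝ c (p u)) (x - y) := by
      simp [hφ'def]
    rw [h1]
    calc ‖(fderiv ℝ c (p s) - fderiv ℝ c (p u)) (x - y)‖
        ≤ ‖fderiv ℝ c (p s) - fderiv ℝ c (p u)‖ * ‖x - y‖ :=
          ContinuousLinearMap.le_opNorm _ _
      _ ≤ β * ‖p s - p u‖ * ‖x - y‖ := by
          gcongr; exact hcβ (p s) (p u)
      _ = M * |s - u| := by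
          have : p s - p u = (s - u) • (x - y) := by simp [hp]; module
          rw [this, norm_smul, Real.norm_eq_abs, hM]; ring
  have ha1 : a ≤ 1 := by linarith
  have T1 := taylor_quad' φ φ' M hMpos hφ hlip 0 a ha
  have T2 := taylor_quad φ φ' M hMpos hφ hlip a 1 ha1
  have hz : c (a • x + b • y) = φ a := by
    have : a • x + b • y = p a := by
      simp only [hp]
      have : b = 1 - a := by linarith
      rw [this]; module
    rw [this]
  have hx1 : c x = φ 1 := by simp [hφdef, hp]
  have hy0 : c y = φ 0 := by simp [hφdef, hp]
  rw [hz, hx1, hy0]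
  have hcomb : φ a - (a • φ 1 + b • φ 0)
      = -(b • (φ 0 - φ a + (a - 0) • φ' a) + a • (φ 1 - φ a - (1 - a) • φ' a)) := by
    have hb' : b = 1 - a := by linarith
    rw [hb']; module
  rw [hcomb, norm_neg]
  calc ‖b • (φ 0 - φ a + (a - 0) • φ' a) + a • (φ 1 - φ a - (1 - a) • φ' a)‖
      ≤ b * ‖φ 0 - φ a + (a - 0) • φ' a‖ + a * ‖φ 1 - φ a - (1 - a) • φ' a‖ := by
        refine (norm_add_le _ _).trans ?_
        rw [norm_smul, norm_smul, Real.norm_eq_abs, Real.norm_eq_abs,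
          abs_of_nonneg ha, abs_of_nonneg hb]
    _ ≤ b * (M / 2 * (a - 0) ^ 2) + a * (M / 2 * (1 - a) ^ 2) := by gcongr
    _ = β * ‖x - y‖ ^ 2 / 2 * (a * b) := by
        have hb' : b = 1 - a := by linarith
        rw [hb', hM]; ring

lemma norm_combo {d : ℕ} (x y : EuclideanSpace ℝ (Fin d)) (a b : ℝ)
    (ha : 0 ≤ a) (hab : a + b = 1) :
    ‖a • x + b • y‖ ^ 2 = a * ‖x‖ ^ 2 + b * ‖y‖ ^ 2 - a * b * ‖x - y‖ ^ 2 := by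
  have hb' : b = 1 - a := by linarith
  have h1 : a • x + b • y = y + a • (x - y) := by rw [hb']; module
  have h2 : x = y + (x - y) := by module
  have e1 : ‖y + a • (x - y)‖ ^ 2
      = ‖y‖ ^ 2 + 2 * (a * inner ℝ y (x - y)) + a ^ 2 * ‖x - y‖ ^ 2 := by
    rw [norm_add_sq_real, real_inner_smul_right, norm_smul, Real.norm_eq_abs,
      abs_of_nonneg ha, mul_pow]
  have e2 : ‖x‖ ^ 2 = ‖y‖ ^ 2 + 2 * inner ℝ y (x - y) + ‖x - y‖ ^ 2 := by
    conv_lhs => rw [h2]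
    rw [norm_add_sq_real]
  rw [h1, e1, e2, hb']; ring

theorem composition_weakly_convex {d m : ℕ}
    (h : EuclideanSpace ℝ (Fin m) → ℝ)
    (c : EuclideanSpace ℝ (Fin d) → EuclideanSpace ℝ (Fin m))
    (L β : ℝ) (hL : 0 ≤ L) (hβ : 0 ≤ β)
    (hh : ConvexOn ℝ Set.univ h)
    (hhL : ∀ u v, |h u - h v| ≤ L * ‖u - v‖)
    (hc : ContDiff ℝ 1 c)
    (hcβ : ∀ x y, ‖fderiv ℝ c x - fderiv ℝ c y‖ ≤ β * ‖x - y‖) :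
    ConvexOn ℝ Set.univ (fun x => h (c x) + (L * β / 2) * ‖x‖ ^ 2) := by
  refine ⟨convex_univ, ?_⟩
  intro x _ y _ a b ha hb hab
  simp only [smul_eq_mul]
  set z := a • x + b • y with hz
  set w := a • c x + b • c y with hw
  have hchord : ‖c z - w‖ ≤ β * ‖x - y‖ ^ 2 / 2 * (a * b) :=
    chord_bound c β hβ hc hcβ x y a b ha hb hab
  have hhz : h (c z) ≤ h w + L * ‖c z - w‖ := by
    have := hhL (c z) w
    have := (abs_le.1 this).2
    linarith
  have hhw : h w ≤ a * h (c x) + b * h (c y) := by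
    simpa using hh.2 (Set.mem_univ (c x)) (Set.mem_univ (c y)) ha hb hab
  have hnorm : ‖z‖ ^ 2 = a * ‖x‖ ^ 2 + b * ‖y‖ ^ 2 - a * b * ‖x - y‖ ^ 2 :=
    norm_combo x y a b ha hab
  have hnn : 0 ≤ ‖c z - w‖ := norm_nonneg _
  have h4 : L * ‖c z - w‖ ≤ L * (β * ‖x - y‖ ^ 2 / 2 * (a * b)) :=
    mul_le_mul_of_nonneg_left hchord hL
  have h5 : (L * β / 2) * ‖z‖ ^ 2
      = a * ((L * β / 2) * ‖x‖ ^ 2) + b * ((L * β / 2) * ‖y‖ ^ 2)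
        - L * (β * ‖x - y‖ ^ 2 / 2 * (a * b)) := by
    rw [hnorm]; ring
  linarith
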